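/- The limit as k tends to infinity of (1/k) * ln( \binom{3k-3}{k-1} - \binom{3k-6}{k-1} ) equals ln(27/4). -/

import Mathlib

open Real Filter Nat Topology


noncomputable def dd (m : ℕ) : ℝ := Real.log (Stirling.stirlingSeq m)

lemma log_fact (m : ℕ) : Real.log (m ! : ℝ) =
    dd m + 1 / 2 * Real.log (2 * m) + m * Real.log (m / Real.exp 1) := by
  have := Stirling.log_stirlingSeq_formula m
  unfold dd
  rw [this]; ring

lemma log_choose3 (m : ℕ) : Real.log ((Nat.choose (3*m) m : ℕ) : ℝ) =
    Real.log ((3*m)! : ℝ) - Real.log (m ! : ℝ) - Real.log ((2*m)! : ℝ) := by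
  have h : m ≤ 3*m := by omega
  have key := Nat.choose_mul_factorial_mul_factorial h
  have h2 : 3*m - m = 2*m := by omega
  rw [h2] at key
  have : ((3*m).choose m : ℝ) * (m ! : ℝ) * ((2*m)! : ℝ) = ((3*m)! : ℝ) := by
    exact_mod_cast congrArg (Nat.cast (R := ℝ)) key
  have p1 : ((3*m).choose m : ℝ) ≠ 0 := by exact_mod_cast (Nat.choose_pos h).ne'
  have p2 : (m ! : ℝ) ≠ 0 := by exact_mod_cast m.factorial_ne_zero
  have p3 : ((2*m)! : ℝ) ≠ 0 := by exact_mod_cast (2*m).factorial_ne_zero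
  have p4 : ((3*m).choose m : ℝ) * (m ! : ℝ) ≠ 0 := mul_ne_zero p1 p2
  rw [← this, Real.log_mul p4 p3, Real.log_mul p1 p2]
  ring

lemma key_eq (m : ℕ) (hm : 1 ≤ m) :
    Real.log ((Nat.choose (3*m) m : ℕ) : ℝ) =
      m * Real.log (27/4) + (dd (3*m) - dd m - dd (2*m))
        + 1/2 * (Real.log (3/4) - Real.log m) := by
  have hm0 : (0:ℝ) < m := by exact_mod_cast hm
  have he : Real.log (Real.exp 1) = 1 := Real.log_exp 1
  have Lmul : ∀ c : ℝ, 0 < c → Real.log (c * m) = Real.log c + Real.log m :=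
    fun c hc => Real.log_mul hc.ne' hm0.ne'
  have Ldiv : ∀ c : ℝ, 0 < c → Real.log (c * m / Real.exp 1) = Real.log c + Real.log m - 1 := by
    intro c hc
    rw [Real.log_div (by positivity) (Real.exp_ne_zero 1), Lmul c hc, he]
  rw [log_choose3, log_fact, log_fact, log_fact]
  push_cast
  rw [show (2:ℝ)*(3*m) = 6*m by ring, show (2:ℝ)*(2*m) = 4*m by ring,
    show (3:ℝ)*m/Real.exp 1 = 3*m/Real.exp 1 by ring,
    show (2:ℝ)*m/Real.exp 1 = 2*m/Real.exp 1 by ring,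
    show (m:ℝ)/Real.exp 1 = 1*m/Real.exp 1 by ring,
    Lmul 6 (by norm_num), Lmul 4 (by norm_num), Lmul 2 (by norm_num),
    Ldiv 3 (by norm_num), Ldiv 2 (by norm_num), Ldiv 1 (by norm_num)]
  have h6 : Real.log 6 = Real.log 2 + Real.log 3 := by
    rw [show (6:ℝ) = 2*3 by norm_num, Real.log_mul] <;> norm_num
  have h4 : Real.log 4 = 2 * Real.log 2 := by
    rw [show (4:ℝ) = 2^2 by norm_num, Real.log_pow]; push_cast; ring
  have h27 : Real.log (27/4) = 3 * Real.log 3 - 2 * Real.log 2 := by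
    rw [Real.log_div (by norm_num) (by norm_num), h4,
      show (27:ℝ) = 3^3 by norm_num, Real.log_pow]
    push_cast
    ring
  have h34 : Real.log (3/4) = Real.log 3 - 2 * Real.log 2 := by
    rw [Real.log_div (by norm_num) (by norm_num), h4]
  rw [h6, h4, h27, h34, Real.log_one]
  ring

lemma tendsto_h :
    Tendsto (fun m : ℕ => (1/(m:ℝ)) * Real.log ((Nat.choose (3*m) m : ℕ) : ℝ))
      atTop (𝓝 (Real.log (27/4))) := by
  have hpi : Real.sqrt π ≠ 0 := by positivity
  have h3 : Tendsto (fun m : ℕ => 3*m) atTop atTop :=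
    tendsto_atTop_mono (fun n => Nat.le_mul_of_pos_left n (by norm_num)) tendsto_id
  have h2 : Tendsto (fun m : ℕ => 2*m) atTop atTop :=
    tendsto_atTop_mono (fun n => Nat.le_mul_of_pos_left n (by norm_num)) tendsto_id
  have d3 : Tendsto (fun m : ℕ => dd (3*m)) atTop (𝓝 (Real.log (Real.sqrt π))) :=
    (Stirling.tendsto_stirlingSeq_sqrt_pi.comp h3).log hpi
  have d2 : Tendsto (fun m : ℕ => dd (2*m)) atTop (𝓝 (Real.log (Real.sqrt π))) :=
    (Stirling.tendsto_stirlingSeq_sqrt_pi.comp h2).log hpi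
  have d1 : Tendsto (fun m : ℕ => dd m) atTop (𝓝 (Real.log (Real.sqrt π))) :=
    Stirling.tendsto_stirlingSeq_sqrt_pi.log hpi
  have hc : Tendsto (fun m : ℕ => dd (3*m) - dd m - dd (2*m)) atTop
      (𝓝 (Real.log (Real.sqrt π) - Real.log (Real.sqrt π) - Real.log (Real.sqrt π))) :=
    (d3.sub d1).sub d2
  have hinv : Tendsto (fun n : ℕ => 1 / (n:ℝ)) atTop (𝓝 0) := tendsto_one_div_atTop_nhds_zero_nat
  have T1 : Tendsto (fun m : ℕ => (1/(m:ℝ)) * (dd (3*m) - dd m - dd (2*m))) atTop (𝓝 0) := by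
    have := hinv.mul hc
    simpa using this
  have hlog : Tendsto (fun m : ℕ => Real.log m / m) atTop (𝓝 0) :=
    (Real.isLittleO_log_id_atTop.tendsto_div_nhds_zero).comp tendsto_natCast_atTop_atTop
  have T2 : Tendsto (fun m : ℕ => (1/(m:ℝ)) * (1/2 * (Real.log (3/4) - Real.log m)))
      atTop (𝓝 0) := by
    have h1 : Tendsto (fun m : ℕ => (1/(m:ℝ)) * (1/2 * Real.log (3/4))) atTop (𝓝 0) := by
      simpa using hinv.mul_const (1/2 * Real.log (3/4))
    have h2' : Tendsto (fun m : ℕ => (1/2) * (Real.log m / m)) atTop (𝓝 0) := by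
      simpa using hlog.const_mul (1/2 : ℝ)
    have := h1.sub h2'
    rw [sub_zero] at this
    refine this.congr (fun m => ?_)
    by_cases hm : (m:ℝ) = 0
    · simp [hm]
    · field_simp
  have main : Tendsto (fun m : ℕ => Real.log (27/4)
      + ((1/(m:ℝ)) * (dd (3*m) - dd m - dd (2*m))
        + (1/(m:ℝ)) * (1/2 * (Real.log (3/4) - Real.log m)))) atTop
      (𝓝 (Real.log (27/4))) := by
    have := tendsto_const_nhds (x := Real.log (27/4)) (f := atTop (α := ℕ)) |>.add (T1.add T2)
    simpa using this
  refine Tendsto.congr' ?_ main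
  filter_upwards [eventually_ge_atTop 1] with m hm
  have hm0 : (m:ℝ) ≠ 0 := by positivity
  rw [key_eq m hm]
  field_simp
  ring

-- composed version: shift by c
lemma tendsto_shift (c : ℕ) :
    Tendsto (fun k : ℕ => (1/(k:ℝ)) * Real.log ((Nat.choose (3*(k-c)) (k-c) : ℕ) : ℝ))
      atTop (𝓝 (Real.log (27/4))) := by
  have hsub : Tendsto (fun k : ℕ => k - c) atTop atTop := tendsto_sub_atTop_nat c
  have hcomp := tendsto_h.comp hsub
  have hratio : Tendsto (fun k : ℕ => ((k - c : ℕ) : ℝ) / k) atTop (𝓝 1) := by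
    have h1 : Tendsto (fun k : ℕ => 1 - (c:ℝ)/k) atTop (𝓝 1) := by
      have := (tendsto_one_div_atTop_nhds_zero_nat).const_mul (c:ℝ)
      have h2 := (tendsto_const_nhds (x := (1:ℝ)) (f := atTop (α := ℕ))).sub this
      simpa [mul_one_div, div_eq_mul_inv] using h2
    refine h1.congr' ?_
    filter_upwards [eventually_ge_atTop c, eventually_ge_atTop 1] with k hk hk1
    have hpos : 0 < k := hk1
    have : ((k - c : ℕ) : ℝ) = (k:ℝ) - c := by
      push_cast [hk]; ring
    rw [this]
    field_simp
  have := hratio.mul hcomp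
  rw [one_mul] at this
  refine this.congr' ?_
  filter_upwards [eventually_gt_atTop c] with k hk
  simp only [Function.comp]
  rcases Nat.exists_eq_add_of_lt hk with ⟨j, rfl⟩
  have hne : ((c + j + 1 - c : ℕ) : ℝ) ≠ 0 := by
    have : c + j + 1 - c = j + 1 := by omega
    rw [this]; positivity
  have hne2 : ((c + j + 1 : ℕ) : ℝ) ≠ 0 := by positivity
  field_simp

theorem stmt_1 :
    Filter.Tendsto
      (fun k : ℕ => (1 / (k : ℝ)) *
        Real.log ((Nat.choose (3 * k - 3) (k - 1) : ℝ) -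
          (Nat.choose (3 * k - 6) (k - 1) : ℝ)))
      Filter.atTop (nhds (Real.log (27 / 4))) := by
  have hlower := tendsto_shift 2
  have hupper := tendsto_shift 1
  refine tendsto_of_tendsto_of_tendsto_of_le_of_le' hlower hupper ?_ ?_
  · -- lower bound: (1/k) log C(3(k-2), k-2) ≤ g k
    filter_upwards [eventually_ge_atTop 2] with k hk
    rcases Nat.exists_eq_add_of_le hk with ⟨j, rfl⟩
    have e1 : 3 * (2 + j) - 3 = 3*j + 3 := by omega
    have e2 : 3 * (2 + j) - 6 = 3*j := by omega
    have e3 : 2 + j - 1 = j + 1 := by omega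
    have e4 : 2 + j - 2 = j := by omega
    rw [e1, e2, e3, e4]
    have hnat : Nat.choose (3*j) j + Nat.choose (3*j) (j+1) ≤ Nat.choose (3*j+3) (j+1) := by
      have hp : Nat.choose (3*j+1) (j+1) = Nat.choose (3*j) j + Nat.choose (3*j) (j+1) :=
        Nat.choose_succ_succ (3*j) j
      rw [← hp]
      exact Nat.choose_le_choose (j+1) (by omega)
    have hpos : 1 ≤ Nat.choose (3*j) j := Nat.choose_pos (by omega)
    have hreal : (Nat.choose (3*j) j : ℝ) ≤
        (Nat.choose (3*j+3) (j+1) : ℝ) - (Nat.choose (3*j) (j+1) : ℝ) := by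
      have := hnat
      have h' : (Nat.choose (3*j) j + Nat.choose (3*j) (j+1) : ℝ) ≤
          (Nat.choose (3*j+3) (j+1) : ℝ) := by exact_mod_cast this
      linarith [h']
    have hposR : (0:ℝ) < (Nat.choose (3*j) j : ℝ) := by exact_mod_cast hpos
    have hlog := Real.log_le_log hposR hreal
    have hk0 : (0:ℝ) ≤ 1 / ((2 + j : ℕ) : ℝ) := by positivity
    exact mul_le_mul_of_nonneg_left hlog hk0
  · -- upper bound: g k ≤ (1/k) log C(3(k-1), k-1)
    filter_upwards [eventually_ge_atTop 2] with k hk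
    rcases Nat.exists_eq_add_of_le hk with ⟨j, rfl⟩
    have e1 : 3 * (2 + j) - 3 = 3*j + 3 := by omega
    have e2 : 3 * (2 + j) - 6 = 3*j := by omega
    have e3 : 2 + j - 1 = j + 1 := by omega
    rw [e1, e2, e3, show 3 * (j+1) = 3*j + 3 from by omega]
    have hsub : (Nat.choose (3*j+3) (j+1) : ℝ) - (Nat.choose (3*j) (j+1) : ℝ) ≤
        (Nat.choose (3*j+3) (j+1) : ℝ) := by
      have : (0:ℝ) ≤ (Nat.choose (3*j) (j+1) : ℝ) := by positivity
      linarith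
    have hpos : 1 ≤ Nat.choose (3*j) j := Nat.choose_pos (by omega)
    have hnat : Nat.choose (3*j) j + Nat.choose (3*j) (j+1) ≤ Nat.choose (3*j+3) (j+1) := by
      have hp : Nat.choose (3*j+1) (j+1) = Nat.choose (3*j) j + Nat.choose (3*j) (j+1) :=
        Nat.choose_succ_succ (3*j) j
      rw [← hp]
      exact Nat.choose_le_choose (j+1) (by omega)
    have hposR : (0:ℝ) < (Nat.choose (3*j+3) (j+1) : ℝ) - (Nat.choose (3*j) (j+1) : ℝ) := by
      have h' : (Nat.choose (3*j) j + Nat.choose (3*j) (j+1) : ℝ) ≤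
          (Nat.choose (3*j+3) (j+1) : ℝ) := by exact_mod_cast hnat
      have hposR0 : (1:ℝ) ≤ (Nat.choose (3*j) j : ℝ) := by exact_mod_cast hpos
      linarith
    have hlog := Real.log_le_log hposR hsub
    have hk0 : (0:ℝ) ≤ 1 / ((2 + j : ℕ) : ℝ) := by positivity
    exact mul_le_mul_of_nonneg_left hlog hk0
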